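/- Let (X, μ) be a probability space, T a measure-preserving invertible transformation of X, and η a self-joining of T, i.e., a T×T-invariant probability measure on X×X with both marginals μ. Let Φ_η be the associated Markov operator on L²(X,μ), determined by ⟨Φ_η f, g⟩_{L²(μ)} = ∫ f(x)·conj(g(y)) dη(x,y). Then for f ∈ L²(X,μ): there exists g ∈ L²(X,μ) with f(x) = g(y) for η-a.e. (x,y) if and only if ‖Φ_η f‖ = ‖f‖. -/

import Mathlib

open MeasureTheory
open scoped ComplexConjugate

local notation "⟪" x ", " y "⟫" => @inner ℂ _ _ x y

/-- Let `η` be a self-joining of an invertible measure-preserving transformation `T` of a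
probability space `(X, μ)` and let `Φ` be the associated Markov operator on `L²(μ)`,
characterized by `∫ Φf(y) conj(g(y)) dμ(y) = ∫∫ f(x) conj(g(y)) dη(x,y)`.  Then, for
`f ∈ L²(μ)`, `f(x)` coincides `η`-a.e. with a function of the second coordinate if and only if
`‖Φ f‖ = ‖f‖`. -/
theorem joining_markov_operator_isometry_iff
    {X : Type*} [MeasurableSpace X] (μ : Measure X) [IsProbabilityMeasure μ]
    (T Tinv : X → X) (hT : MeasurePreserving T μ μ) (hTinv : MeasurePreserving Tinv μ μ)
    (hinv₁ : ∀ x, Tinv (T x) = x) (hinv₂ : ∀ x, T (Tinv x) = x)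
    (η : Measure (X × X)) [IsProbabilityMeasure η]
    (hη : η.map (Prod.map T T) = η)
    (hmarg₁ : η.map Prod.fst = μ) (hmarg₂ : η.map Prod.snd = μ)
    (Φ : Lp ℂ 2 μ →L[ℂ] Lp ℂ 2 μ)
    (hΦ : ∀ f g : Lp ℂ 2 μ,
      ∫ y, (Φ f : X → ℂ) y * (starRingEnd ℂ) ((g : X → ℂ) y) ∂μ =
        ∫ p : X × X, (f : X → ℂ) p.1 * (starRingEnd ℂ) ((g : X → ℂ) p.2) ∂η)
    (f : Lp ℂ 2 μ) :
    (∃ g : Lp ℂ 2 μ, ∀ᵐ p : X × X ∂η, (f : X → ℂ) p.1 = (g : X → ℂ) p.2) ↔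
      ‖Φ f‖ = ‖f‖ := by
  have mpfst : MeasurePreserving (Prod.fst : X × X → X) η μ := ⟨measurable_fst, hmarg₁⟩
  have mpsnd : MeasurePreserving (Prod.snd : X × X → X) η μ := ⟨measurable_snd, hmarg₂⟩
  -- lifts to L²(η)
  have memA : MemLp ((f : X → ℂ) ∘ Prod.fst) 2 η :=
    (Lp.memLp f).comp_measurePreserving mpfst
  have memB : MemLp ((Φ f : X → ℂ) ∘ Prod.snd) 2 η :=
    (Lp.memLp (Φ f)).comp_measurePreserving mpsnd
  set A : Lp ℂ 2 η := memA.toLp _ with hAdef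
  set B : Lp ℂ 2 η := memB.toLp _ with hBdef
  -- norms of the lifts
  have hnormA : ‖A‖ = ‖f‖ := by
    rw [hAdef, Lp.norm_toLp,
      eLpNorm_comp_measurePreserving (Lp.aestronglyMeasurable f) mpfst, Lp.norm_def]
  have hnormB : ‖B‖ = ‖Φ f‖ := by
    rw [hBdef, Lp.norm_toLp,
      eLpNorm_comp_measurePreserving (Lp.aestronglyMeasurable (Φ f)) mpsnd, Lp.norm_def]
  -- the cross inner product
  have hAB : ⟪A, B⟫ = ((‖Φ f‖ : ℂ)) ^ 2 := by
    have h1 : ⟪A, B⟫ = ∫ p : X × X, conj ((f : X → ℂ) p.1) * (Φ f : X → ℂ) p.2 ∂η := by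
      rw [L2.inner_def]
      refine integral_congr_ae ?_
      filter_upwards [memA.coeFn_toLp, memB.coeFn_toLp] with p h₁ h₂
      rw [RCLike.inner_apply, h₁, h₂]
      exact mul_comm _ _
    have h2 : ∫ p : X × X, conj ((f : X → ℂ) p.1) * (Φ f : X → ℂ) p.2 ∂η =
        conj (∫ p : X × X, (f : X → ℂ) p.1 * conj ((Φ f : X → ℂ) p.2) ∂η) := by
      rw [← integral_conj]
      simp [map_mul]
    have h3 := hΦ f (Φ f)
    have h4 : conj (∫ y, (Φ f : X → ℂ) y * conj ((Φ f : X → ℂ) y) ∂μ) = ⟪Φ f, Φ f⟫ := by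
      rw [L2.inner_def, ← integral_conj]
      refine integral_congr_ae (Filter.Eventually.of_forall fun y => ?_)
      simp [map_mul, mul_comm, RCLike.mul_conj]
    rw [h1, h2, ← h3, h4, inner_self_eq_norm_sq_to_K]
    rfl
  -- the key identity
  have key : ‖A - B‖ ^ 2 = ‖f‖ ^ 2 - ‖Φ f‖ ^ 2 := by
    have h := @norm_sub_sq ℂ _ _ _ _ A B
    rw [hAB, hnormA, hnormB] at h
    have hre : RCLike.re ((‖Φ f‖ : ℂ) ^ 2) = ‖Φ f‖ ^ 2 := by
      simp [← Complex.ofReal_pow]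
    rw [hre] at h
    rw [h]; ring
  constructor
  · -- forward direction
    rintro ⟨g, hae⟩
    -- g ∘ snd coincides with A, so ‖g‖ = ‖f‖
    have memC : MemLp ((g : X → ℂ) ∘ Prod.snd) 2 η :=
      (Lp.memLp g).comp_measurePreserving mpsnd
    have hAC : A = memC.toLp _ := MemLp.toLp_congr memA memC hae
    have hnormg : ‖g‖ = ‖f‖ := by
      rw [← hnormA, hAC, Lp.norm_toLp,
        eLpNorm_comp_measurePreserving (Lp.aestronglyMeasurable g) mpsnd, Lp.norm_def]
    -- ⟪g, Φ f⟫ = ‖g‖²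
    have hinner : ⟪g, Φ f⟫ = ((‖g‖ : ℂ)) ^ 2 := by
      have e1 : ⟪g, Φ f⟫ = ∫ y, (Φ f : X → ℂ) y * conj ((g : X → ℂ) y) ∂μ := by
        rw [L2.inner_def]
        refine integral_congr_ae (Filter.Eventually.of_forall fun y => ?_)
        simp [RCLike.inner_apply, mul_comm]
      have e2 : ∫ p : X × X, (f : X → ℂ) p.1 * conj ((g : X → ℂ) p.2) ∂η =
          ∫ p : X × X, (g : X → ℂ) p.2 * conj ((g : X → ℂ) p.2) ∂η := by
        refine integral_congr_ae ?_
        filter_upwards [hae] with p hp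
        rw [hp]
      have e3 : ∫ p : X × X, (g : X → ℂ) p.2 * conj ((g : X → ℂ) p.2) ∂η =
          ∫ y, (g : X → ℂ) y * conj ((g : X → ℂ) y) ∂μ := by
        have hm : AEStronglyMeasurable (fun y => (g : X → ℂ) y * conj ((g : X → ℂ) y))
            (η.map Prod.snd) := by
          rw [hmarg₂]
          exact (Lp.aestronglyMeasurable g).mul
            (RCLike.continuous_conj.comp_aestronglyMeasurable (Lp.aestronglyMeasurable g))
        have hint := integral_map (μ := η) measurable_snd.aemeasurable hm
        rw [hmarg₂] at hint
        exact hint.symm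
      have e4 : ∫ y, (g : X → ℂ) y * conj ((g : X → ℂ) y) ∂μ = ⟪g, g⟫ := by
        rw [L2.inner_def]
        refine integral_congr_ae (Filter.Eventually.of_forall fun y => ?_)
        simp [RCLike.inner_apply, mul_comm, RCLike.mul_conj]
      rw [e1, hΦ f g, e2, e3, e4, inner_self_eq_norm_sq_to_K]
      rfl
    -- ‖Φ f - g‖² = ‖Φ f‖² - ‖g‖² ≥ 0 gives ‖f‖ ≤ ‖Φ f‖
    have hge : ‖f‖ ^ 2 ≤ ‖Φ f‖ ^ 2 := by
      have h := @norm_sub_sq ℂ _ _ _ _ g (Φ f)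
      rw [hinner] at h
      have hre : RCLike.re ((‖g‖ : ℂ) ^ 2) = ‖g‖ ^ 2 := by
        simp [← Complex.ofReal_pow]
      rw [hre] at h
      have h0 : (0 : ℝ) ≤ ‖g - Φ f‖ ^ 2 := sq_nonneg _
      rw [h, hnormg] at h0
      linarith
    have hle : ‖Φ f‖ ^ 2 ≤ ‖f‖ ^ 2 := by
      have h0 : (0 : ℝ) ≤ ‖A - B‖ ^ 2 := sq_nonneg _
      rw [key] at h0
      linarith
    calc ‖Φ f‖ = Real.sqrt (‖Φ f‖ ^ 2) := (Real.sqrt_sq (norm_nonneg _)).symm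
      _ = Real.sqrt (‖f‖ ^ 2) := by rw [le_antisymm hle hge]
      _ = ‖f‖ := Real.sqrt_sq (norm_nonneg _)
  · -- backward direction
    intro h
    refine ⟨Φ f, ?_⟩
    have hABeq : A = B := by
      have h0 : ‖A - B‖ ^ 2 = 0 := by rw [key, h]; ring
      have h1 : ‖A - B‖ = 0 := by
        have := sq_eq_zero_iff.mp h0
        exact this
      rw [norm_eq_zero, sub_eq_zero] at h1
      exact h1
    have h2 : ((f : X → ℂ) ∘ Prod.fst) =ᵐ[η] ((Φ f : X → ℂ) ∘ Prod.snd) := by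
      have hA := memA.coeFn_toLp
      have hB := memB.coeFn_toLp
      rw [hAdef] at hABeq
      calc ((f : X → ℂ) ∘ Prod.fst) =ᵐ[η] (memA.toLp _ : X × X → ℂ) := hA.symm
        _ = (B : X × X → ℂ) := by rw [hABeq]
        _ =ᵐ[η] ((Φ f : X → ℂ) ∘ Prod.snd) := hB
    filter_upwards [h2] with p hp
    exact hp
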